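/- arXiv:2510.23491 — 2 statements merged into one kernel-verified Lean document; each statement's English description precedes it below -/
import Mathlib

section
/- Let A_m, P, Q be real n×n matrices with P symmetric, A_mᵀP + P·A_m = -Q, and ⟪x, Q·x⟫ ≥ 0 for every x ∈ ℝ^n. Let B be a real n×m matrix, γ_θ > 0 and γ_λ > 0 real numbers, Φ : ℝ → (m×p real matrices) and u : ℝ → ℝ^m any functions. Let e : ℝ → ℝ^n, θ̃ : ℝ → ℝ^p, and λ̃ : ℝ → ℝ^m be differentiable functions such that for all t ≥ 0: (i) e'(t) = A_m·e(t) + B·(Φ(t)·θ̃(t) - diag(λ̃(t))·u(t)), (ii) ⟪θ̃(t), θ̃'(t)⟫ ≤ -γ_θ·⟪θ̃(t), Φ(t)ᵀ·Bᵀ·P·e(t)⟫, and (iii) ⟪λ̃(t), λ̃'(t)⟫ ≤ γ_λ·⟪λ̃(t), diag(u(t))·Bᵀ·P·e(t)⟫. Define V(t) = ⟪e(t), P·e(t)⟫ + ‖θ̃(t)‖²/γ_θ + ‖λ̃(t)‖²/γ_λ. Then V(t) ≤ V(s) for all 0 ≤ s ≤ t; moreover, if μ > 0 satisfies ⟪x,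 P·x⟫ ≥ μ·‖x‖² for all x, then ‖e(t)‖² ≤ V(0)/μ for all t ≥ 0. -/
open scoped RealInnerProductSpace Matrix

private lemma inner_eq_dot {k : ℕ} (x y : EuclideanSpace ℝ (Fin k)) :
    ⟪x, y⟫ = dotProduct (x : Fin k → ℝ) (y : Fin k → ℝ) := by
  simp [PiLp.inner_apply, dotProduct, RCLike.inner_apply, mul_comm]

private lemma dot_swap {a b : ℕ} (M : Matrix (Fin a) (Fin b) ℝ)
    (x : Fin b → ℝ) (y : Fin a → ℝ) :
    dotProduct (M.mulVec x) y = dotProduct x (Mᵀ.mulVec y) := by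
  rw [Matrix.mulVec_transpose, dotProduct_comm, Matrix.dotProduct_mulVec,
    dotProduct_comm]

private lemma diag_swap {a : ℕ} (d x : Fin a → ℝ) :
    (Matrix.diagonal d).mulVec x = (Matrix.diagonal x).mulVec d := by
  funext i; simp [Matrix.mulVec_diagonal, mul_comm]

private lemma toEL_eq {a b : ℕ} (M : Matrix (Fin a) (Fin b) ℝ) (v : EuclideanSpace ℝ (Fin b)) :
    Matrix.toEuclideanLin M v = (M.mulVec v : Fin a → ℝ) := rfl

private lemma hasDerivAt_mulVecE {a b : ℕ} (M : Matrix (Fin a) (Fin b) ℝ)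
    {f : ℝ → EuclideanSpace ℝ (Fin b)} {f' : EuclideanSpace ℝ (Fin b)} {t : ℝ}
    (hf : HasDerivAt f f' t) :
    HasDerivAt (fun s => Matrix.toEuclideanLin M (f s)) (Matrix.toEuclideanLin M f') t :=
  (LinearMap.toContinuousLinearMap (Matrix.toEuclideanLin M)).hasFDerivAt.comp_hasDerivAt t hf

private lemma key_ineq {n m p : ℕ} (Am P Q : Matrix (Fin n) (Fin n) ℝ) (hP : P.IsSymm)
    (hLyap : Amᵀ * P + P * Am = -Q) (B : Matrix (Fin n) (Fin m) ℝ)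
    (Φ : Matrix (Fin m) (Fin p) ℝ) (E : Fin n → ℝ) (th : Fin p → ℝ) (la uu : Fin m → ℝ) :
    dotProduct E (P.mulVec
        (Am.mulVec E + B.mulVec (Φ.mulVec th - (Matrix.diagonal la).mulVec uu)))
      + dotProduct
          (Am.mulVec E + B.mulVec (Φ.mulVec th - (Matrix.diagonal la).mulVec uu))
          (P.mulVec E)
      = - dotProduct E (Q.mulVec E)
        + 2 * dotProduct th ((Φᵀ * Bᵀ * P).mulVec E)
        - 2 * dotProduct la ((Matrix.diagonal uu * Bᵀ * P).mulVec E) := by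
  have hPT : Pᵀ = P := hP
  set w : Fin m → ℝ := Φ.mulVec th - (Matrix.diagonal la).mulVec uu with hw
  have h1 : dotProduct (Am.mulVec E + B.mulVec w) (P.mulVec E)
      = dotProduct E (P.mulVec (Am.mulVec E + B.mulVec w)) := by
    rw [dotProduct_comm, dot_swap, hPT]
  rw [h1, ← two_mul]
  have h2 : P.mulVec (Am.mulVec E + B.mulVec w)
      = (P * Am).mulVec E + (P * B).mulVec w := by
    rw [Matrix.mulVec_add, Matrix.mulVec_mulVec, Matrix.mulVec_mulVec]
  rw [h2, dotProduct_add, mul_add]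
  have h3 : dotProduct E ((P * Am).mulVec E)
      = dotProduct E ((Amᵀ * P).mulVec E) := by
    conv_lhs => rw [dotProduct_comm, dot_swap, Matrix.transpose_mul, hPT]
  have h4 : 2 * dotProduct E ((P * Am).mulVec E)
      = - dotProduct E (Q.mulVec E) := by
    rw [two_mul]
    nth_rewrite 1 [h3]
    rw [← dotProduct_add, ← Matrix.add_mulVec, hLyap, Matrix.neg_mulVec,
      dotProduct_neg]
  have h5 : dotProduct E ((P * B).mulVec w)
      = dotProduct th ((Φᵀ * Bᵀ * P).mulVec E)
        - dotProduct la ((Matrix.diagonal uu * Bᵀ * P).mulVec E) := by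
    rw [dotProduct_comm, dot_swap, Matrix.transpose_mul, hPT, hw,
      sub_dotProduct, dot_swap, diag_swap, dot_swap, Matrix.diagonal_transpose,
      Matrix.mulVec_mulVec, Matrix.mulVec_mulVec, Matrix.mul_assoc Φᵀ,
      Matrix.mul_assoc (Matrix.diagonal uu)]
  rw [h4, h5]; ring

/-- claims (a)–(c) of Theorem 3. For the adaptive error model with both
matched parametric uncertainty `θ̃` and input-matrix uncertainty `λ̃`, the Lyapunov function
`V = eᵀPe + ‖θ̃‖²/γ_θ + ‖λ̃‖²/γ_λ` is nonincreasing on `[0, ∞)` and the tracking error is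
bounded by `√(V(0)/λ_min(P))`. -/
theorem lyapunov_nonincreasing_error_bounded_input_uncertainty
    {n m p : ℕ} (Am P Q : Matrix (Fin n) (Fin n) ℝ) (hP : P.IsSymm)
    (hLyap : Amᵀ * P + P * Am = -Q)
    (hQ : ∀ x : EuclideanSpace ℝ (Fin n), 0 ≤ ⟪x, WithLp.toLp 2 (Q.mulVec x)⟫)
    (B : Matrix (Fin n) (Fin m) ℝ) (γθ γlam : ℝ) (hγθ : 0 < γθ) (hγlam : 0 < γlam)
    (Φ : ℝ → Matrix (Fin m) (Fin p) ℝ) (u : ℝ → EuclideanSpace ℝ (Fin m))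
    (e : ℝ → EuclideanSpace ℝ (Fin n)) (θ : ℝ → EuclideanSpace ℝ (Fin p))
    (lam : ℝ → EuclideanSpace ℝ (Fin m))
    (he : Differentiable ℝ e) (hθ : Differentiable ℝ θ) (hlam : Differentiable ℝ lam)
    (hdyn : ∀ t ≥ (0:ℝ),
      deriv e t = Am.mulVec (e t) +
        B.mulVec ((Φ t).mulVec (θ t) - (Matrix.diagonal (lam t)).mulVec (u t)))
    (hadaptθ : ∀ t ≥ (0:ℝ),
      ⟪θ t, deriv θ t⟫ ≤ -γθ * ⟪θ t, WithLp.toLp 2 (((Φ t)ᵀ * Bᵀ * P).mulVec (e t))⟫)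
    (hadaptlam : ∀ t ≥ (0:ℝ),
      ⟪lam t, deriv lam t⟫ ≤ γlam * ⟪lam t, WithLp.toLp 2 ((Matrix.diagonal (u t) * Bᵀ * P).mulVec (e t))⟫)
    (V : ℝ → ℝ)
    (hV : ∀ t, V t = ⟪e t, WithLp.toLp 2 (P.mulVec (e t))⟫ + ‖θ t‖ ^ 2 / γθ + ‖lam t‖ ^ 2 / γlam) :
    (∀ s t : ℝ, 0 ≤ s → s ≤ t → V t ≤ V s) ∧
    (∀ μ : ℝ, 0 < μ →
      (∀ x : EuclideanSpace ℝ (Fin n), μ * ‖x‖ ^ 2 ≤ ⟪x, WithLp.toLp 2 (P.mulVec x)⟫) →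
      ∀ t ≥ (0:ℝ), ‖e t‖ ^ 2 ≤ V 0 / μ) := by
  have hfun : V = fun s => ⟪e s, Matrix.toEuclideanLin P (e s)⟫
      + ⟪θ s, θ s⟫ / γθ + ⟪lam s, lam s⟫ / γlam := by
    funext s
    rw [hV, real_inner_self_eq_norm_sq, real_inner_self_eq_norm_sq]; rfl
  have hD : ∀ t : ℝ, HasDerivAt V
      ((⟪e t, Matrix.toEuclideanLin P (deriv e t)⟫
          + ⟪deriv e t, Matrix.toEuclideanLin P (e t)⟫)
        + (⟪θ t, deriv θ t⟫ + ⟪deriv θ t, θ t⟫) / γθ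
        + (⟪lam t, deriv lam t⟫ + ⟪deriv lam t, lam t⟫) / γlam) t := by
    intro t
    have h1 := (he t).hasDerivAt.inner ℝ (hasDerivAt_mulVecE P (he t).hasDerivAt)
    have h2 := ((hθ t).hasDerivAt.inner ℝ (hθ t).hasDerivAt).div_const γθ
    have h3 := ((hlam t).hasDerivAt.inner ℝ (hlam t).hasDerivAt).div_const γlam
    rw [hfun]
    exact (h1.add h2).add h3
  have hVdiff : Differentiable ℝ V := fun t => (hD t).differentiableAt
  have hder : ∀ t ≥ (0:ℝ), deriv V t ≤ 0 := by
    intro t ht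
    rw [(hD t).deriv]
    have hθ2 : ⟪deriv θ t, θ t⟫ = ⟪θ t, deriv θ t⟫ := real_inner_comm _ _
    have hl2 : ⟪deriv lam t, lam t⟫ = ⟪lam t, deriv lam t⟫ := real_inner_comm _ _
    rw [hθ2, hl2]
    have hkey := key_ineq Am P Q hP hLyap B (Φ t) (e t) (θ t) (lam t) (u t)
    rw [inner_eq_dot, inner_eq_dot, toEL_eq, toEL_eq, hdyn t ht, hkey]
    have haθ : ⟪θ t, deriv θ t⟫ / γθ
        ≤ - dotProduct (θ t : Fin p → ℝ) (((Φ t)ᵀ * Bᵀ * P).mulVec (e t)) := by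
      rw [div_le_iff₀ hγθ]
      have := hadaptθ t ht
      rw [inner_eq_dot (θ t) (WithLp.toLp 2 (((Φ t)ᵀ * Bᵀ * P).mulVec (e t)))] at this
      linarith
    have hal : ⟪lam t, deriv lam t⟫ / γlam
        ≤ dotProduct (lam t : Fin m → ℝ)
            ((Matrix.diagonal (u t) * Bᵀ * P).mulVec (e t)) := by
      rw [div_le_iff₀ hγlam]
      have := hadaptlam t ht
      rw [inner_eq_dot (lam t)
        (WithLp.toLp 2 (((Matrix.diagonal (u t)) * Bᵀ * P).mulVec (e t)))] at this
      linarith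
    have hQ' : 0 ≤ dotProduct (e t : Fin n → ℝ) (Q.mulVec (e t)) := by
      have := hQ (e t); rwa [inner_eq_dot] at this
    rw [add_div, add_div]
    linarith
  have mono : ∀ s t : ℝ, 0 ≤ s → s ≤ t → V t ≤ V s := by
    intro s t hs hst
    have hA : AntitoneOn V (Set.Ici (0:ℝ)) := by
      apply antitoneOn_of_deriv_nonpos (convex_Ici 0) hVdiff.continuous.continuousOn
        (fun x _ => (hVdiff x).differentiableWithinAt)
      intro x hx
      rw [interior_Ici] at hx
      exact hder x (le_of_lt hx)
    exact hA hs (hs.trans hst) hst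
  refine ⟨mono, ?_⟩
  intro μ hμ hPμ t ht
  have h1 : μ * ‖e t‖ ^ 2 ≤ V t := by
    rw [hV]
    have h2 := hPμ (e t)
    have h3 : 0 ≤ ‖θ t‖ ^ 2 / γθ := by positivity
    have h4 : 0 ≤ ‖lam t‖ ^ 2 / γlam := by positivity
    linarith
  have h5 : V t ≤ V 0 := mono 0 t le_rfl ht
  rw [le_div_iff₀ hμ]
  nlinarith
end

section
/- Let r ≥ 1 be a natural number, let α_1, …, α_r be positive real numbers, let δ > 0, and let H_1, …, H_r : ℝ → ℝ be differentiable functions such that: (i) for every i with 1 ≤ i ≤ r-1 and every t ≥ 0, H_i'(t) = H_{i+1}(t) - α_i·H_i(t); (ii) for every t ≥ 0, if H_r(t) ≤ δ/(3α_r) then H_r'(t) ≥ -α_r·H_r(t) + δ; and (iii) H_i(0) ≥ 0 for every 1 ≤ i ≤ r. Then H_i(t) ≥ 0 for every 1 ≤ i ≤ r and every t ≥ 0. -/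
open Set Real Filter Topology

/-- Grönwall-type lemma: if `f 0 ≥ 0` and `f' ≥ -a·f` on `[0,∞)`, then `f ≥ 0` on `[0,∞)`. -/
lemma gronwall_nonneg (f : ℝ → ℝ) (hf : Differentiable ℝ f) (a : ℝ)
    (h0 : 0 ≤ f 0) (hd : ∀ t ≥ (0:ℝ), -a * f t ≤ deriv f t) :
    ∀ t ≥ (0:ℝ), 0 ≤ f t := by
  intro t ht
  set g : ℝ → ℝ := fun u => Real.exp (a * u) * f u with hgdef
  have hgd : ∀ s : ℝ, HasDerivAt g (Real.exp (a * s) * (deriv f s + a * f s)) s := by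
    intro s
    have h1 : HasDerivAt (fun u : ℝ => Real.exp (a * u)) (a * Real.exp (a * s)) s := by
      have := (Real.hasDerivAt_exp (a * s)).comp s ((hasDerivAt_id s).const_mul a)
      exact this.congr_deriv (by ring)
    have h2 := (hf s).hasDerivAt
    have := h1.mul h2
    exact this.congr_deriv (by ring)
  have hmono : MonotoneOn g (Ici (0:ℝ)) := by
    apply monotoneOn_of_deriv_nonneg (convex_Ici 0)
    · exact (Continuous.mul (by continuity) hf.continuous).continuousOn
    · intro s _
      exact ((hgd s).differentiableAt).differentiableWithinAt
    · intro s hs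
      rw [interior_Ici] at hs
      rw [(hgd s).deriv]
      have hds := hd s hs.le
      have hsum : 0 ≤ deriv f s + a * f s := by linarith
      exact mul_nonneg (Real.exp_pos _).le hsum
  have hg0 : g 0 = f 0 := by simp [hgdef]
  have hgt : g 0 ≤ g t := hmono (le_refl (0:ℝ)) ht ht
  have : 0 ≤ Real.exp (a * t) * f t := by
    have : 0 ≤ g t := by linarith [hg0 ▸ hgt, h0]
    simpa [hgdef] using this
  exact nonneg_of_mul_nonneg_right this (Real.exp_pos _)

/-- Barrier lemma: if `f 0 ≥ 0` and `f' > 0` whenever `f ≤ c` (with `c > 0`) on `[0,∞)`,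
then `f ≥ 0` on `[0,∞)`. -/
lemma barrier_nonneg (f : ℝ → ℝ) (hf : Differentiable ℝ f) (c : ℝ) (hc : 0 < c)
    (h0 : 0 ≤ f 0) (hd : ∀ t ≥ (0:ℝ), f t ≤ c → 0 < deriv f t) :
    ∀ t ≥ (0:ℝ), 0 ≤ f t := by
  intro t ht
  by_contra hneg
  push_neg at hneg
  have ht0 : 0 < t := by
    rcases lt_or_eq_of_le ht with h | h
    · exact h
    · exfalso; rw [← h] at hneg; linarith
  set S := {s : ℝ | s ∈ Icc 0 t ∧ 0 ≤ f s} with hSdef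
  have hS0 : (0:ℝ) ∈ S := ⟨⟨le_refl 0, ht0.le⟩, h0⟩
  have hSbdd : BddAbove S := ⟨t, fun s hs => hs.1.2⟩
  have hSclosed : IsClosed S := by
    have heq : S = Icc 0 t ∩ f ⁻¹' (Ici 0) := by
      ext s
      simp only [hSdef, Set.mem_setOf_eq, Set.mem_inter_iff, Set.mem_preimage, Set.mem_Ici]
    rw [heq]
    exact isClosed_Icc.inter (isClosed_Ici.preimage hf.continuous)
  set s₀ := sSup S with hs₀def
  have hs₀S : s₀ ∈ S := hSclosed.csSup_mem ⟨0, hS0⟩ hSbdd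
  have hs₀t : s₀ < t := by
    rcases lt_or_eq_of_le hs₀S.1.2 with h | h
    · exact h
    · exfalso; have := hs₀S.2; rw [h] at this; linarith
  have hafter : ∀ s, s₀ < s → s ≤ t → f s < 0 := by
    intro s h1 h2
    by_contra h
    push_neg at h
    have hsS : s ∈ S := ⟨⟨le_trans hs₀S.1.1 h1.le, h2⟩, h⟩
    exact absurd (le_csSup hSbdd hsS) (not_le.mpr h1)
  have hfs₀le : f s₀ ≤ 0 := by
    have htend : Tendsto f (𝓝[>] s₀) (𝓝 (f s₀)) :=
      (hf.continuous.tendsto s₀).mono_left nhdsWithin_le_nhds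
    apply le_of_tendsto htend
    filter_upwards [Ioo_mem_nhdsGT_of_mem ⟨le_refl s₀, hs₀t⟩] with s hs
    exact (hafter s hs.1 hs.2.le).le
  have hfs₀ : f s₀ = 0 := le_antisymm hfs₀le hs₀S.2
  have hmono : StrictMonoOn f (Icc s₀ t) := by
    apply strictMonoOn_of_deriv_pos (convex_Icc _ _) hf.continuous.continuousOn
    intro s hs
    rw [interior_Icc] at hs
    exact hd s (le_trans hs₀S.1.1 hs.1.le)
      (le_trans (hafter s hs.1 hs.2.le).le hc.le)
  have := hmono ⟨le_refl s₀, hs₀t.le⟩ ⟨hs₀t.le, le_refl t⟩ hs₀t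
  rw [hfs₀] at this
  linarith

/-- full analytic content of claim (a) of Theorem 4. The cascade relations
`H_i' = H_{i+1} - α_i·H_i` together with the Error-Based Safety Filter guarantee
`H_r' ≥ -α_r·H_r + δ` whenever `H_r ≤ δ/(3α_r)` propagate nonnegativity of all `H_i`. -/
theorem cascade_nonneg_ebsf
    (r : ℕ) (hr : 1 ≤ r) (α : ℕ → ℝ) (hα : ∀ i, 1 ≤ i → i ≤ r → 0 < α i)
    (δ : ℝ) (hδ : 0 < δ)
    (H : ℕ → ℝ → ℝ) (hdiff : ∀ i, 1 ≤ i → i ≤ r → Differentiable ℝ (H i))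
    (hcasc : ∀ i, 1 ≤ i → i ≤ r - 1 → ∀ t ≥ (0:ℝ),
      deriv (H i) t = H (i + 1) t - α i * H i t)
    (hlast : ∀ t ≥ (0:ℝ), H r t ≤ δ / (3 * α r) → deriv (H r) t ≥ -α r * H r t + δ)
    (h0 : ∀ i, 1 ≤ i → i ≤ r → 0 ≤ H i 0) :
    ∀ i, 1 ≤ i → i ≤ r → ∀ t ≥ (0:ℝ), 0 ≤ H i t := by
  have hαr : 0 < α r := hα r hr le_rfl
  -- Base case: the last function H r is nonnegative via the barrier lemma.
  have hbase : ∀ t ≥ (0:ℝ), 0 ≤ H r t := by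
    apply barrier_nonneg (H r) (hdiff r hr le_rfl) (δ / (3 * α r))
      (by positivity) (h0 r hr le_rfl)
    intro t ht hle
    have hder := hlast t ht hle
    have h1 : α r * H r t ≤ α r * (δ / (3 * α r)) :=
      mul_le_mul_of_nonneg_left hle hαr.le
    have h2 : α r * (δ / (3 * α r)) = δ / 3 := by
      field_simp
    rw [h2] at h1
    linarith
  -- Downward propagation step via the Grönwall lemma.
  have hstep : ∀ i, 1 ≤ i → i ≤ r - 1 → (∀ t ≥ (0:ℝ), 0 ≤ H (i + 1) t) →
      ∀ t ≥ (0:ℝ), 0 ≤ H i t := by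
    intro i h1 h2 hnext
    apply gronwall_nonneg (H i) (hdiff i h1 (le_trans h2 (Nat.sub_le r 1))) (α i)
      (h0 i h1 (le_trans h2 (Nat.sub_le r 1)))
    intro t ht
    rw [hcasc i h1 h2 t ht]
    have := hnext t ht
    linarith
  -- Downward induction (on the distance to r).
  have hmain : ∀ k : ℕ, ∀ i, 1 ≤ i → i + k = r → ∀ t ≥ (0:ℝ), 0 ≤ H i t := by
    intro k
    induction k with
    | zero =>
        intro i h1 h2
        have : i = r := by omega
        subst this
        exact hbase
    | succ k ih =>
        intro i h1 h2
        have hi : i ≤ r - 1 := by omega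
        exact hstep i h1 hi (ih (i + 1) (by omega) (by omega))
  intro i h1 h2
  exact hmain (r - i) i h1 (by omega)
end
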